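/- Let G be a graph with Δ(G) ≤ k − 1, k ≥ 11, having no nice k-coloring, and let u be a 2-vertex with neighbors x, y and ψ a nice k-coloring of G − uy with ψ(ux) = a. Then for every neighbor z of y, the color a is present at z (on an edge at z if d(z) ≤ 5). -/

import Mathlib

open SimpleGraph

/-- The degree of a vertex `v` in a graph `G` (number of neighbors). -/
noncomputable def deg {V : Type*} (G : SimpleGraph V) (v : V) : ℕ :=
  (G.neighborSet v).ncard

/-- The maximum degree `Δ(G)` of a finite graph. -/
noncomputable def maxDeg {V : Type*} [Fintype V] (G : SimpleGraph V) : ℕ :=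
  Finset.univ.sup (deg G)

/-- A total `k`-coloring of `G`: a coloring of vertices (`cv`) and edges (`ce`) with `k`
colors such that no two adjacent vertices, no two incident edges, and no vertex and
incident edge receive the same color. -/
def IsTotalColoring {V : Type*} (G : SimpleGraph V) (k : ℕ)
    (cv : V → Fin k) (ce : Sym2 V → Fin k) : Prop :=
  (∀ u v, G.Adj u v → cv u ≠ cv v) ∧
  (∀ u v w, G.Adj u v → G.Adj u w → v ≠ w → ce s(u, v) ≠ ce s(u, w)) ∧
  (∀ u v, G.Adj u v → cv u ≠ ce s(u, v))

def HasTotalColoring {V : Type*} (G : SimpleGraph V) (k : ℕ) : Prop :=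
  ∃ cv ce, IsTotalColoring G k cv ce

/-- The total chromatic number `χ''(G)`: the least `k` admitting a total `k`-coloring. -/
noncomputable def totalChromaticNumber {V : Type*} (G : SimpleGraph V) : ℕ :=
  sInf {k | HasTotalColoring G k}

/-- `H` is a minor of `G`: there are pairwise disjoint nonempty connected branch sets in `G`,
one for each vertex of `H`, with an edge of `G` between the branch sets of any two
vertices adjacent in `H`. -/
def HasMinor {V W : Type*} (G : SimpleGraph V) (H : SimpleGraph W) : Prop :=
  ∃ φ : W → Set V,
    (∀ w, (G.induce (φ w)).Connected) ∧
    (∀ w₁ w₂, w₁ ≠ w₂ → Disjoint (φ w₁) (φ w₂)) ∧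
    (∀ w₁ w₂, H.Adj w₁ w₂ → ∃ u ∈ φ w₁, ∃ v ∈ φ w₂, G.Adj u v)

abbrev K5 : SimpleGraph (Fin 5) := ⊤

abbrev K33 : SimpleGraph (Fin 3 ⊕ Fin 3) := completeBipartiteGraph (Fin 3) (Fin 3)

/-- A nice `k`-coloring: a proper coloring of all edges and of all vertices of degree at
least `6`, such that no two adjacent or incident colored elements share a color. -/
def IsNiceColoring {V : Type*} (G : SimpleGraph V) (k : ℕ)
    (cv : V → Fin k) (ce : Sym2 V → Fin k) : Prop :=
  (∀ u v, G.Adj u v → 6 ≤ deg G u → 6 ≤ deg G v → cv u ≠ cv v) ∧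
  (∀ u v w, G.Adj u v → G.Adj u w → v ≠ w → ce s(u, v) ≠ ce s(u, w)) ∧
  (∀ u v, G.Adj u v → 6 ≤ deg G u → cv u ≠ ce s(u, v))

def HasNiceColoring {V : Type*} (G : SimpleGraph V) (k : ℕ) : Prop :=
  ∃ cv ce, IsNiceColoring G k cv ce

/-- A color `c` is missing at `v` if it is used neither on `v` (when `v` is colored,
i.e. has degree at least 6) nor on any edge incident with `v`. -/
def MissingAt {V : Type*} {k : ℕ} (G : SimpleGraph V)
    (cv : V → Fin k) (ce : Sym2 V → Fin k) (v : V) (c : Fin k) : Prop :=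
  (6 ≤ deg G v → cv v ≠ c) ∧ ∀ w, G.Adj v w → ce s(v, w) ≠ c

/-- `G` is planar: it has a drawing in the plane with injective vertex placement and
edges drawn as arcs whose interiors are pairwise disjoint and avoid all vertex points. -/
def IsPlanar {V : Type*} (G : SimpleGraph V) : Prop :=
  ∃ (p : V → ℝ × ℝ) (γ : G.edgeSet → ℝ → ℝ × ℝ),
    Function.Injective p ∧
    (∀ e, ContinuousOn (γ e) (Set.Icc 0 1)) ∧
    (∀ e, Set.InjOn (γ e) (Set.Icc 0 1)) ∧
    (∀ e : G.edgeSet, ∀ u v : V, (e : Sym2 V) = s(u, v) →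
      ({γ e 0, γ e 1} : Set (ℝ × ℝ)) = {p u, p v}) ∧
    (∀ e : G.edgeSet, ∀ w : V, ∀ t ∈ Set.Ioo (0 : ℝ) 1, γ e t ≠ p w) ∧
    (∀ e₁ e₂ : G.edgeSet, e₁ ≠ e₂ → ∀ s ∈ Set.Ioo (0 : ℝ) 1, ∀ t ∈ Set.Ioo (0 : ℝ) 1,
      γ e₁ s ≠ γ e₂ t)

/-- A planar triangulation, i.e. an edge-maximal planar graph. -/
def IsPlanarTriangulation {W : Type*} (H : SimpleGraph W) : Prop :=
  IsPlanar H ∧ ∀ H' : SimpleGraph W, H < H' → ¬ IsPlanar H'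

/-- The Wagner graph `V₈`: the 8-cycle together with its four main diagonals. -/
def wagnerGraph : SimpleGraph (ZMod 8) :=
  SimpleGraph.fromRel (fun i j => j = i + 1 ∨ j = i + 4)


section Aux

variable {V : Type*} {G : SimpleGraph V} {u x y : V}

lemma aux_adjS (huy : G.Adj u y) {p q : V} (h : G.Adj p q) (hne : s(p,q) ≠ s(u,y)) :
    (G.deleteEdges {s(u,y)}).Adj p q := by
  rw [SimpleGraph.deleteEdges_adj]
  exact ⟨h, by simpa using hne⟩

lemma aux_adjS' {p q : V} (h : (G.deleteEdges {s(u,y)}).Adj p q) :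
    G.Adj p q ∧ s(p,q) ≠ s(u,y) := by
  rw [SimpleGraph.deleteEdges_adj] at h
  exact ⟨h.1, by simpa using h.2⟩

lemma aux_ne1 (huy_ne : u ≠ y) {p q : V} (hpu : p ≠ u) (hqu : q ≠ u) :
    s(p,q) ≠ s(u,y) := by
  intro h
  rw [Sym2.eq_iff] at h
  rcases h with ⟨rfl, rfl⟩ | ⟨rfl, rfl⟩ <;> simp_all

lemma aux_ne2 (huy_ne : u ≠ y) {q : V} (hqy : q ≠ y) : s(u,q) ≠ s(u,y) := by
  intro h
  rw [Sym2.eq_iff] at h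
  rcases h with ⟨-, h2⟩ | ⟨h1, -⟩
  · exact hqy h2
  · exact huy_ne h1

lemma aux_deg_le (s : Set (Sym2 V)) (v : V) [Fintype V] :
    deg (G.deleteEdges s) v ≤ deg G v := by
  apply Set.ncard_le_ncard _ (Set.toFinite _)
  intro w hw
  exact ((SimpleGraph.deleteEdges_adj).mp hw).1

lemma aux_deg_eq [Fintype V] (huy_ne : u ≠ y) {v : V} (hvu : v ≠ u) (hvy : v ≠ y) :
    deg (G.deleteEdges {s(u,y)}) v = deg G v := by
  unfold deg
  congr 1
  ext w
  simp only [SimpleGraph.mem_neighborSet, SimpleGraph.deleteEdges_adj,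
    Set.mem_singleton_iff]
  constructor
  · exact fun h => h.1
  · intro h
    refine ⟨h, ?_⟩
    rw [Sym2.eq_iff]
    rintro (⟨rfl, rfl⟩ | ⟨rfl, rfl⟩) <;> simp_all

lemma aux_u_only [Fintype V] (hux : G.Adj u x) (huy : G.Adj u y) (hxy : x ≠ y)
    (hu2 : deg G u = 2) :
    ∀ w, (G.deleteEdges {s(u,y)}).Adj u w → w = x := by
  have hset : ({x, y} : Set V) = G.neighborSet u := by
    apply Set.eq_of_subset_of_ncard_le
    · rintro w (rfl | rfl)
      · exact hux
      · exact huy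
    · rw [show (G.neighborSet u).ncard = deg G u from rfl, hu2, Set.ncard_pair hxy]
    · exact Set.toFinite _
  intro w hw
  obtain ⟨hadj, hne⟩ := aux_adjS' hw
  have : w ∈ ({x, y} : Set V) := by rw [hset]; exact hadj
  rcases this with rfl | rfl
  · rfl
  · exact (hne rfl).elim

end Aux

lemma build_nice {V : Type*} [Fintype V] {G : SimpleGraph V} {k : ℕ}
    {u x y : V} (hux : G.Adj u x) (huy : G.Adj u y) (hxy : x ≠ y) (hu2 : deg G u = 2)
    {cv : V → Fin k} {ce : Sym2 V → Fin k}
    (hψ : IsNiceColoring (G.deleteEdges {s(u,y)}) k cv ce)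
    (c : Fin k) (cv' : V → Fin k)
    (h1 : c ≠ ce s(u, x))
    (h2 : ∀ w, (G.deleteEdges {s(u,y)}).Adj y w → ce s(y, w) ≠ c)
    (h3 : ∀ v, v ≠ y → cv' v = cv v)
    (h4 : cv' y ≠ c)
    (h5 : ∀ w, (G.deleteEdges {s(u,y)}).Adj y w → cv' y ≠ ce s(y, w))
    (h6 : ∀ w, G.Adj y w → w ≠ u → 6 ≤ deg G w → cv' y ≠ cv w) :
    HasNiceColoring G k := by
  classical
  obtain ⟨hψ1, hψ2, hψ3⟩ := hψ
  set G' := G.deleteEdges {s(u,y)} with hG'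
  have huy_ne : u ≠ y := huy.ne
  set ce' : Sym2 V → Fin k := fun e => if e = s(u,y) then c else ce e with hce'
  have hE1 : ce' s(u,y) = c := if_pos rfl
  have hE2 : ∀ e, e ≠ s(u,y) → ce' e = ce e := fun e h => if_neg h
  have hune : ∀ v : V, 6 ≤ deg G v → v ≠ u := by
    rintro v h rfl; rw [hu2] at h; omega
  refine ⟨cv', ce', ?_, ?_, ?_⟩
  · -- vertex-vertex
    intro p q hpq hp6 hq6
    have hpu := hune p hp6
    have hqu := hune q hq6
    by_cases hpy : p = y
    · subst hpy
      rw [h3 q hpq.ne']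
      exact h6 q hpq hqu hq6
    · by_cases hqy : q = y
      · subst hqy
        rw [h3 p hpy]
        exact (h6 p hpq.symm hpu hp6).symm
      · rw [h3 p hpy, h3 q hqy]
        exact hψ1 p q (aux_adjS huy hpq (aux_ne1 huy_ne hpu hqu))
          (by rw [aux_deg_eq huy_ne hpu hpy]; exact hp6)
          (by rw [aux_deg_eq huy_ne hqu hqy]; exact hq6)
  · -- edge-edge
    intro p q r hpq hpr hqr
    by_cases hq1 : s(p,q) = s(u,y) <;> by_cases hr1 : s(p,r) = s(u,y)
    · exact absurd (Sym2.congr_right.mp (hq1.trans hr1.symm)) hqr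
    · rw [hq1, hE1, hE2 _ hr1]
      rcases Sym2.eq_iff.mp hq1 with ⟨rfl, rfl⟩ | ⟨rfl, rfl⟩
      · -- p = u, q = y
        have hr' : G'.Adj p r :=
          aux_adjS huy hpr (aux_ne2 huy_ne (Ne.symm hqr))
        rw [aux_u_only hux huy hxy hu2 r hr']
        exact h1
      · -- p = y, q = u
        have hr' : G'.Adj p r :=
          aux_adjS huy hpr (by
            intro h
            rw [Sym2.eq_iff] at h
            rcases h with ⟨h1', -⟩ | ⟨-, h2'⟩
            · exact huy_ne h1'.symm
            · exact hqr h2'.symm)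
        exact (h2 r hr').symm
    · rw [hr1, hE1, hE2 _ hq1]
      rcases Sym2.eq_iff.mp hr1 with ⟨rfl, rfl⟩ | ⟨rfl, rfl⟩
      · have hq' : G'.Adj p q :=
          aux_adjS huy hpq (aux_ne2 huy_ne hqr)
        rw [aux_u_only hux huy hxy hu2 q hq']
        exact h1.symm
      · have hq' : G'.Adj p q :=
          aux_adjS huy hpq (by
            intro h
            rw [Sym2.eq_iff] at h
            rcases h with ⟨h1', -⟩ | ⟨-, h2'⟩
            · exact huy_ne h1'.symm
            · exact hqr h2')
        exact h2 q hq'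
    · rw [hE2 _ hq1, hE2 _ hr1]
      exact hψ2 p q r (aux_adjS huy hpq hq1) (aux_adjS huy hpr hr1) hqr
  · -- vertex-edge
    intro p q hpq hp6
    have hpu := hune p hp6
    by_cases hq1 : s(p,q) = s(u,y)
    · rcases Sym2.eq_iff.mp hq1 with ⟨rfl, rfl⟩ | ⟨rfl, rfl⟩
      · exact absurd rfl hpu
      · rw [hq1, hE1]
        exact h4
    · rw [hE2 _ hq1]
      by_cases hpy : p = y
      · subst hpy
        exact h5 q (aux_adjS huy hpq hq1)
      · rw [h3 p hpy]
        exact hψ3 p q (aux_adjS huy hpq hq1)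
          (by rw [aux_deg_eq huy_ne hpu hpy]; exact hp6)

lemma build_nice2 {V : Type*} [Fintype V] {G : SimpleGraph V} {k : ℕ}
    {u x y z : V} (hux : G.Adj u x) (huy : G.Adj u y) (hxy : x ≠ y) (hu2 : deg G u = 2)
    (hyz : G.Adj y z) (hzu : z ≠ u)
    {cv : V → Fin k} {ce : Sym2 V → Fin k}
    (hψ : IsNiceColoring (G.deleteEdges {s(u,y)}) k cv ce)
    (hy6 : 6 ≤ deg (G.deleteEdges {s(u,y)}) y)
    (hmy : MissingAt (G.deleteEdges {s(u,y)}) cv ce y (ce s(u,x)))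
    (hmz : MissingAt (G.deleteEdges {s(u,y)}) cv ce z (ce s(u,x))) :
    HasNiceColoring G k := by
  classical
  obtain ⟨hψ1, hψ2, hψ3⟩ := hψ
  set G' := G.deleteEdges {s(u,y)} with hG'
  have huy_ne : u ≠ y := huy.ne
  have hzy : z ≠ y := hyz.ne'
  set a : Fin k := ce s(u,x) with hadef
  set b : Fin k := ce s(y,z) with hbdef
  have he12 : s(y,z) ≠ s(u,y) := by
    intro h
    rw [Sym2.eq_iff] at h
    rcases h with ⟨h1', -⟩ | ⟨-, h2'⟩
    · exact huy_ne h1'.symm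
    · exact hzu h2'
  have hyz' : G'.Adj y z := aux_adjS huy hyz he12
  have hba : b ≠ a := hmy.2 z hyz'
  have hune : ∀ v : V, 6 ≤ deg G v → v ≠ u := by
    rintro v h rfl; rw [hu2] at h; omega
  have hdtrans : ∀ v : V, v ≠ u → 6 ≤ deg G v → 6 ≤ deg G' v := by
    intro v hvu h6
    by_cases hvy : v = y
    · subst hvy; exact hy6
    · rw [aux_deg_eq huy_ne hvu hvy]; exact h6
  set ce' : Sym2 V → Fin k := fun e => if e = s(u,y) then b else if e = s(y,z) then a else ce e
    with hce'
  have hE1 : ce' s(u,y) = b := if_pos rfl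
  have hE2 : ce' s(y,z) = a := by simp [hce', he12]
  have hE3 : ∀ e, e ≠ s(u,y) → e ≠ s(y,z) → ce' e = ce e := by
    intro e he1 he2; simp [hce', he1, he2]
  refine ⟨cv, ce', ?_, ?_, ?_⟩
  · -- vertex-vertex
    intro p q hpq hp6 hq6
    have hpu := hune p hp6
    have hqu := hune q hq6
    exact hψ1 p q (aux_adjS huy hpq (aux_ne1 huy_ne hpu hqu))
      (hdtrans p hpu hp6) (hdtrans q hqu hq6)
  · -- edge-edge
    intro p q r hpq hpr hqr
    by_cases hq1 : s(p,q) = s(u,y)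
    · by_cases hr1 : s(p,r) = s(u,y)
      · exact absurd (Sym2.congr_right.mp (hq1.trans hr1.symm)) hqr
      · rw [hq1, hE1]
        by_cases hr2 : s(p,r) = s(y,z)
        · rw [hr2, hE2]; exact hba
        · rw [hE3 _ hr1 hr2]
          rcases Sym2.eq_iff.mp hq1 with ⟨rfl, rfl⟩ | ⟨rfl, rfl⟩
          · -- p = u, q = y
            have hr' : G'.Adj p r := aux_adjS huy hpr (aux_ne2 huy_ne (Ne.symm hqr))
            rw [aux_u_only hux huy hxy hu2 r hr']
            exact hba
          · -- p = y, q = u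
            have hrz : r ≠ z := by rintro rfl; exact hr2 rfl
            have hr' : G'.Adj p r := aux_adjS huy hpr (by
              intro h
              rw [Sym2.eq_iff] at h
              rcases h with ⟨h1', -⟩ | ⟨-, h2'⟩
              · exact huy_ne h1'.symm
              · exact hqr h2'.symm)
            exact (hψ2 p r z hr' hyz' hrz).symm
    · by_cases hq2 : s(p,q) = s(y,z)
      · rw [hq2, hE2]
        by_cases hr1 : s(p,r) = s(u,y)
        · rw [hr1, hE1]; exact hba.symm
        · by_cases hr2 : s(p,r) = s(y,z)
          · exact absurd (Sym2.congr_right.mp (hq2.trans hr2.symm)) hqr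
          · rw [hE3 _ hr1 hr2]
            rcases Sym2.eq_iff.mp hq2 with ⟨rfl, rfl⟩ | ⟨rfl, rfl⟩
            · -- p = y, q = z
              have hr' : G'.Adj p r := aux_adjS huy hpr hr1
              exact (hmy.2 r hr').symm
            · -- p = z, q = y
              have hr' : G'.Adj p r := aux_adjS huy hpr hr1
              exact (hmz.2 r hr').symm
      · rw [hE3 _ hq1 hq2]
        by_cases hr1 : s(p,r) = s(u,y)
        · rw [hr1, hE1]
          rcases Sym2.eq_iff.mp hr1 with ⟨rfl, rfl⟩ | ⟨rfl, rfl⟩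
          · have hq' : G'.Adj p q := aux_adjS huy hpq (aux_ne2 huy_ne hqr)
            rw [aux_u_only hux huy hxy hu2 q hq']
            exact hba.symm
          · have hqz : q ≠ z := by rintro rfl; exact hq2 rfl
            have hq' : G'.Adj p q := aux_adjS huy hpq (by
              intro h
              rw [Sym2.eq_iff] at h
              rcases h with ⟨h1', -⟩ | ⟨-, h2'⟩
              · exact huy_ne h1'.symm
              · exact hqr h2')
            exact hψ2 p q z hq' hyz' hqz
        · by_cases hr2 : s(p,r) = s(y,z)
          · rw [hr2, hE2]
            rcases Sym2.eq_iff.mp hr2 with ⟨rfl, rfl⟩ | ⟨rfl, rfl⟩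
            · have hq' : G'.Adj p q := aux_adjS huy hpq hq1
              exact hmy.2 q hq'
            · have hq' : G'.Adj p q := aux_adjS huy hpq hq1
              exact hmz.2 q hq'
          · rw [hE3 _ hr1 hr2]
            exact hψ2 p q r (aux_adjS huy hpq hq1) (aux_adjS huy hpr hr1) hqr
  · -- vertex-edge
    intro p q hpq hp6
    have hpu := hune p hp6
    by_cases hq1 : s(p,q) = s(u,y)
    · rw [hq1, hE1]
      rcases Sym2.eq_iff.mp hq1 with ⟨rfl, rfl⟩ | ⟨rfl, rfl⟩
      · exact absurd rfl hpu
      · exact hψ3 p z hyz' hy6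
    · by_cases hq2 : s(p,q) = s(y,z)
      · rw [hq2, hE2]
        rcases Sym2.eq_iff.mp hq2 with ⟨rfl, rfl⟩ | ⟨rfl, rfl⟩
        · exact hmy.1 hy6
        · exact hmz.1 (hdtrans p hpu hp6)
      · rw [hE3 _ hq1 hq2]
        exact hψ3 p q (aux_adjS huy hpq hq1) (hdtrans p hpu hp6)

lemma exists_color_notin {k : ℕ} (F : Finset (Fin k)) (h : F.card < k) :
    ∃ c : Fin k, c ∉ F := by
  by_contra h'
  push_neg at h'
  have hsub : (Finset.univ : Finset (Fin k)) ⊆ F := fun c _ => h' c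
  have := Finset.card_le_card hsub
  rw [Finset.card_univ, Fintype.card_fin] at this
  omega


/-- Claim 1(ii): with `G`, `u`, `x`, `y`, `ψ` as in Claim 1, the color `a = ψ(ux)` is
present at every neighbor `z` of `y`. -/
theorem present_at_neighbors {V : Type*} [Fintype V] (G : SimpleGraph V) (k : ℕ)
    (hk : 11 ≤ k) (hΔ : maxDeg G ≤ k - 1)
    (hG : ¬ HasNiceColoring G k)
    (u x y : V) (hux : G.Adj u x) (huy : G.Adj u y) (hxy : x ≠ y)
    (hu2 : deg G u = 2)
    (cv : V → Fin k) (ce : Sym2 V → Fin k)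
    (hψ : IsNiceColoring (G.deleteEdges {s(u, y)}) k cv ce)
    (a : Fin k) (ha : ce s(u, x) = a) :
    ∀ z : V, G.Adj y z → ¬ MissingAt (G.deleteEdges {s(u, y)}) cv ce z a := by
  classical
  intro z hyz hmiss
  set G' := G.deleteEdges {s(u,y)} with hG'
  have huy_ne : u ≠ y := huy.ne
  subst ha
  by_cases hzu : z = u
  · subst hzu
    exact hmiss.2 x (aux_adjS huy hux (aux_ne2 huy_ne hxy)) rfl
  · have hzy : z ≠ y := hyz.ne'
    have hyz' : G'.Adj y z := aux_adjS huy hyz (by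
      intro h
      rw [Sym2.eq_iff] at h
      rcases h with ⟨h1', -⟩ | ⟨-, h2'⟩
      · exact huy_ne h1'.symm
      · exact hzu h2')
    have hdegyG : deg G y ≤ k - 1 :=
      le_trans (Finset.le_sup (f := deg G) (Finset.mem_univ y)) hΔ
    have hNy' : G'.neighborSet y = G.neighborSet y \ {u} := by
      ext w
      constructor
      · intro hw
        have hw' : G'.Adj y w := hw
        obtain ⟨h1, h2⟩ := aux_adjS' hw'
        refine ⟨h1, ?_⟩
        intro hmem
        rw [Set.mem_singleton_iff] at hmem
        subst hmem
        exact h2 (by rw [Sym2.eq_iff]; right; exact ⟨rfl, rfl⟩)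
      · rintro ⟨h1, h2⟩
        have h1' : G.Adj y w := h1
        exact aux_adjS huy h1' (by
          intro h
          rw [Sym2.eq_iff] at h
          rcases h with ⟨h', -⟩ | ⟨-, h'⟩
          · exact huy_ne h'.symm
          · exact h2 h')
    have hdegy' : deg G' y = deg G y - 1 := by
      rw [show deg G' y = (G'.neighborSet y).ncard from rfl, hNy']
      exact Set.ncard_diff_singleton_of_mem huy.symm
    have hdegy_pos : 1 ≤ deg G y :=
      (Set.ncard_pos (Set.toFinite _)).mpr ⟨u, huy.symm⟩
    set Ny : Finset V := Finset.univ.filter (fun w => G'.Adj y w) with hNydef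
    have hmemNy : ∀ w, w ∈ Ny ↔ G'.Adj y w := by intro w; simp [hNydef]
    have hNycard : Ny.card = deg G' y := by
      have hset : G'.neighborSet y = ↑Ny := by
        ext w; simp [hNydef, SimpleGraph.mem_neighborSet]
      rw [show deg G' y = (G'.neighborSet y).ncard from rfl, hset, Set.ncard_coe_finset]
    set Ecol : Finset (Fin k) := Ny.image (fun w => ce s(y,w)) with hEdef
    have hEcard : Ecol.card ≤ deg G' y := by
      rw [← hNycard]; exact Finset.card_image_le
    have hEmem : ∀ cc : Fin k, cc ∈ Ecol ↔ ∃ w, G'.Adj y w ∧ ce s(y,w) = cc := by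
      intro cc
      simp [hEdef, hmemNy]
    by_cases hy6 : 6 ≤ deg G' y
    · -- Case II: y has high degree in G'
      by_cases hmissy : ∃ c : Fin k, c ≠ ce s(u,x) ∧ MissingAt G' cv ce y c
      · -- II.A : extend directly
        obtain ⟨c, hca, hm⟩ := hmissy
        refine hG (build_nice hux huy hxy hu2 hψ c cv hca (fun w hw => hm.2 w hw)
          (fun v _ => rfl) (hm.1 hy6) (fun w hw => hψ.2.2 y w hw hy6) ?_)
        intro w hw hwu h6w
        exact hψ.1 y w (aux_adjS huy hw (aux_ne1 huy_ne (Ne.symm huy_ne) hwu)) hy6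
          (by rw [aux_deg_eq huy_ne hwu hw.ne']; exact h6w)
      · -- II.B : a is missing at y; swap colors
        push_neg at hmissy
        set S : Finset (Fin k) := insert (cv y) Ecol with hSdef
        have hsub : Finset.univ.erase (ce s(u,x)) ⊆ S := by
          intro c hc
          have hcne : c ≠ ce s(u,x) := Finset.ne_of_mem_erase hc
          have hnm := hmissy c hcne
          rw [MissingAt, not_and_or] at hnm
          rcases hnm with h | h
          · push_neg at h
            rw [hSdef]
            exact Finset.mem_insert.mpr (Or.inl h.2.symm)
          · push_neg at h
            obtain ⟨w, hw, hcw⟩ := h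
            rw [hSdef]
            exact Finset.mem_insert.mpr (Or.inr ((hEmem c).mpr ⟨w, hw, hcw⟩))
        have hScard : S.card ≤ k - 1 := by
          have h1 : S.card ≤ Ecol.card + 1 := Finset.card_insert_le _ _
          omega
        have hEq : Finset.univ.erase (ce s(u,x)) = S := by
          apply Finset.eq_of_subset_of_card_le hsub
          rw [Finset.card_erase_of_mem (Finset.mem_univ _), Finset.card_univ,
            Fintype.card_fin]
          omega
        have haS : ce s(u,x) ∉ S := by
          rw [← hEq]; exact Finset.notMem_erase _ _
        have hmy : MissingAt G' cv ce y (ce s(u,x)) := by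
          constructor
          · intro _ heq
            exact haS (heq ▸ (hSdef ▸ Finset.mem_insert_self (cv y) Ecol))
          · intro w hw heq
            exact haS (hSdef ▸ Finset.mem_insert.mpr (Or.inr ((hEmem _).mpr ⟨w, hw, heq⟩)))
        exact hG (build_nice2 hux huy hxy hu2 hyz hzu hψ hy6 hmy hmiss)
    · -- Case I: y has low degree in G'
      push_neg at hy6
      have hNy5 : Ny.card ≤ 5 := by omega
      have hFvcard : (Ecol ∪ Ny.image cv).card < k := by
        have h1 := Finset.card_union_le Ecol (Ny.image cv)
        have h2 : (Ny.image cv).card ≤ Ny.card := Finset.card_image_le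
        omega
      obtain ⟨d, hd⟩ := exists_color_notin _ hFvcard
      have hF2card : (insert (ce s(u,x)) (insert d Ecol)).card < k := by
        have h1 := Finset.card_insert_le (ce s(u,x)) (insert d Ecol)
        have h2 := Finset.card_insert_le d Ecol
        omega
      obtain ⟨c, hc⟩ := exists_color_notin _ hF2card
      have hca : c ≠ ce s(u,x) := by
        intro h
        exact hc (h ▸ Finset.mem_insert_self _ _)
      have hcd : d ≠ c := by
        intro h
        exact hc (h ▸ Finset.mem_insert.mpr (Or.inr (Finset.mem_insert_self _ _)))
      have hcE : ∀ w, G'.Adj y w → ce s(y,w) ≠ c := by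
        intro w hw heq
        exact hc (Finset.mem_insert.mpr (Or.inr (Finset.mem_insert.mpr
          (Or.inr (heq ▸ (hEmem _).mpr ⟨w, hw, rfl⟩)))))
      have hdE : ∀ w, G'.Adj y w → d ≠ ce s(y,w) := by
        intro w hw heq
        exact hd (Finset.mem_union.mpr (Or.inl (heq ▸ (hEmem _).mpr ⟨w, hw, rfl⟩)))
      have hdV : ∀ w, G.Adj y w → w ≠ u → d ≠ cv w := by
        intro w hw hwu heq
        have hw' : G'.Adj y w := aux_adjS huy hw (aux_ne1 huy_ne (Ne.symm huy_ne) hwu)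
        exact hd (Finset.mem_union.mpr (Or.inr (Finset.mem_image.mpr
          ⟨w, (hmemNy w).mpr hw', heq.symm⟩)))
      refine hG (build_nice hux huy hxy hu2 hψ c (Function.update cv y d) hca hcE
        (fun v hv => Function.update_of_ne hv d cv) ?_ ?_ ?_)
      · rw [Function.update_self]; exact hcd
      · intro w hw
        rw [Function.update_self]; exact hdE w hw
      · intro w hw hwu h6w
        rw [Function.update_self]; exact hdV w hw hwu
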